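/- In the fermionic Fock space F, suppose |u⟩ = |0⟩ and |f⟩ ∈ F satisfies Σ_{m∈ℤ} ψ_m|0⟩ ⊗ ψ_m*|f⟩ = |f⟩ ⊗ |0⟩ in F ⊗ F. Then there exists an element α = Σ_{m≥0} c_m ψ_m in the span V of the ψ_m such that |f⟩ = α|0⟩. Conversely, if |f⟩ = α|0⟩ for some α = Σ_{m≥0} c_m ψ_m, then Σ_{m∈ℤ} ψ_m|0⟩ ⊗ ψ_m*|f⟩ = |f⟩ ⊗ |0⟩. -/
import Mathlib


open scoped TensorProduct

/-- In the fermionic Fock space `F` with vacuum `v = |0⟩`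
(`ψ_m v = 0` for `m < 0`, `ψ*_m v = 0` for `m ≥ 0`, and the `ψ_m v`, `m ≥ 0`,
linearly independent), let `f ∈ F` with `ψ*_m f = 0` for all `m ≥ M`.  Then
`Σ_{m∈ℤ} ψ_m|0⟩ ⊗ ψ*_m|f⟩ = |f⟩ ⊗ |0⟩` (the sum reducing to `0 ≤ m < M`) holds
if and only if `f = α|0⟩` for some `α = Σ_{m≥0} c_m ψ_m` with finitely many `c_m ≠ 0`. -/
theorem stmt15 {F : Type*} [AddCommGroup F] [Module ℂ F]
    (ψ ψs : ℤ → (F →ₗ[ℂ] F))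
    (h1 : ∀ (i j : ℤ) (x : F),
      ψ i (ψs j x) + ψs j (ψ i x) = if i = j then x else 0)
    (h2 : ∀ (i j : ℤ) (x : F), ψ i (ψ j x) + ψ j (ψ i x) = 0)
    (h3 : ∀ (i j : ℤ) (x : F), ψs i (ψs j x) + ψs j (ψs i x) = 0)
    (v : F)
    (hv1 : ∀ m : ℤ, m < 0 → ψ m v = 0)
    (hv2 : ∀ m : ℤ, 0 ≤ m → ψs m v = 0)
    (hindep : LinearIndependent ℂ fun m : ℕ => ψ (m : ℤ) v)
    (f : F) (M : ℕ) (hM : ∀ m : ℤ, (M : ℤ) ≤ m → ψs m f = 0) :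
    (∑ m ∈ Finset.range M, (ψ (m : ℤ) v) ⊗ₜ[ℂ] (ψs (m : ℤ) f)) = f ⊗ₜ[ℂ] v
      ↔ ∃ c : ℕ →₀ ℂ, f = c.sum fun m cm => cm • ψ (m : ℤ) v := by
  -- v ≠ 0
  have hv0 : v ≠ 0 := by
    intro h
    exact hindep.ne_zero 0 (by simp [h])
  -- a linear functional with g v = 1
  obtain ⟨g, hg⟩ : ∃ g : F →ₗ[ℂ] ℂ, g v = 1 := by
    have hex : ∃ g : Module.Dual ℂ F, g v ≠ 0 := by
      by_contra h
      push_neg at h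
      exact hv0 ((Module.forall_dual_apply_eq_zero_iff ℂ v).mp h)
    obtain ⟨g, hg⟩ := hex
    exact ⟨(g v)⁻¹ • g, by simp [inv_mul_cancel₀ hg]⟩
  -- key anticommutation consequence
  have key : ∀ k m : ℕ, ψs (k : ℤ) (ψ (m : ℤ) v) = if m = k then v else 0 := by
    intro k m
    have h := h1 (m : ℤ) (k : ℤ) v
    rw [hv2 (k : ℤ) (Int.natCast_nonneg k), map_zero, zero_add] at h
    simpa using h
  constructor
  · intro heq
    -- apply the map x ⊗ y ↦ g y • x to both sides
    have hD := congrArg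
      (TensorProduct.lift (((LinearMap.lsmul ℂ F).comp g).flip)) heq
    simp only [map_sum, TensorProduct.lift.tmul, LinearMap.flip_apply,
      LinearMap.comp_apply, LinearMap.lsmul_apply, hg, one_smul] at hD
    -- hD : ∑ k in range M, g (ψs k f) • ψ k v = f
    set c : ℕ →₀ ℂ := Finsupp.onFinset (Finset.range M)
      (fun k => if k < M then g (ψs (k : ℤ) f) else 0)
      (fun k hk => Finset.mem_range.mpr (by by_contra h; simp [h] at hk)) with hcdef
    refine ⟨c, ?_⟩
    have hsum : c.sum (fun m cm => cm • ψ (m : ℤ) v)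
        = ∑ k ∈ Finset.range M, c k • ψ (k : ℤ) v :=
      Finsupp.sum_of_support_subset c Finsupp.support_onFinset_subset _
        (fun i _ => zero_smul ℂ _)
    rw [hsum, ← hD]
    refine Finset.sum_congr rfl fun k hk => ?_
    have hkM := Finset.mem_range.mp hk
    simp [hcdef, Finsupp.onFinset_apply, hkM]
  · rintro ⟨c, hc⟩
    have hpsif : ∀ m : ℕ, ψs (m : ℤ) f = c m • v := by
      intro m
      rw [hc, Finsupp.sum, map_sum]
      simp only [map_smul, key m, smul_ite, smul_zero]
      rw [Finset.sum_ite_eq' c.support m (fun k => c k • v)]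
      by_cases h : m ∈ c.support
      · simp [h]
      · simp [h, Finsupp.notMem_support_iff.mp h]
    have hsupp : c.support ⊆ Finset.range M := by
      intro m hm
      rw [Finset.mem_range]
      by_contra h
      have h0 := hM (m : ℤ) (by exact_mod_cast not_lt.mp h)
      rw [hpsif m] at h0
      rcases smul_eq_zero.mp h0 with h' | h'
      · exact Finsupp.mem_support_iff.mp hm h'
      · exact hv0 h'
    have hf : f = ∑ m ∈ Finset.range M, c m • ψ (m : ℤ) v := by
      rw [hc, Finsupp.sum]
      exact Finset.sum_subset hsupp
        (fun x _ hx => by simp [Finsupp.notMem_support_iff.mp hx])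
    calc ∑ m ∈ Finset.range M, (ψ (m : ℤ) v) ⊗ₜ[ℂ] (ψs (m : ℤ) f)
        = ∑ m ∈ Finset.range M, (c m • ψ (m : ℤ) v) ⊗ₜ[ℂ] v := by
          refine Finset.sum_congr rfl fun m _ => ?_
          rw [hpsif m, TensorProduct.tmul_smul, TensorProduct.smul_tmul']
      _ = f ⊗ₜ[ℂ] v := by rw [← TensorProduct.sum_tmul, ← hf]
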